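/- Let a, c ∈ ℝ, b, B ∈ ℝ \ {0}, and p, q ∈ ℕ with −b/B = p/q. Then H(x,y) = x^q · (cy + axy + (b/2)y²)^p is a polynomial first integral on ℝ² of the system ẋ = x(ax + by + c), ẏ = y((a(B−b)/b)x + (B/2)y + Bc/b). -/

import Mathlib

theorem stmt8 (a c b B : ℝ) (hb : b ≠ 0) (hB : B ≠ 0) (p q : ℕ)
    (hp : 0 < p) (hq : 0 < q) (hbB : -b / B = (p : ℝ) / q) :
    ∀ x y : ℝ,
      deriv (fun x' => x' ^ q * (c * y + a * x' * y + b / 2 * y ^ 2) ^ p) x *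
          (x * (a * x + b * y + c)) +
        deriv (fun y' => x ^ q * (c * y' + a * x * y' + b / 2 * y' ^ 2) ^ p) y *
          (y * (a * (B - b) / b * x + B / 2 * y + B * c / b)) = 0 := by
  intro x y
  have hu : HasDerivAt (fun x' => c * y + a * x' * y + b / 2 * y ^ 2) (a * y) x := by
    have h := ((((hasDerivAt_id x).const_mul a).mul_const y).const_add (c * y)).add_const
      (b / 2 * y ^ 2)
    simpa using h
  have h1 : HasDerivAt (fun x' => x' ^ q * (c * y + a * x' * y + b / 2 * y ^ 2) ^ p)
      ((q : ℝ) * x ^ (q - 1) * (c * y + a * x * y + b / 2 * y ^ 2) ^ p +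
        x ^ q * ((p : ℝ) * (c * y + a * x * y + b / 2 * y ^ 2) ^ (p - 1) * (a * y))) x :=
    (hasDerivAt_pow q x).mul (hu.pow p)
  have hv : HasDerivAt (fun y' => c * y' + a * x * y' + b / 2 * y' ^ 2)
      (c + a * x + b * y) y := by
    have h := (((hasDerivAt_id y).const_mul c).add
      ((hasDerivAt_id y).const_mul (a * x))).add ((hasDerivAt_pow 2 y).const_mul (b / 2))
    have h' : HasDerivAt (fun y' => c * y' + a * x * y' + b / 2 * y' ^ 2)
      (c + a * x + b / 2 * (2 * y)) y := by simpa [Pi.add_def] using h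
    convert h' using 1
    ring
  have h2 : HasDerivAt (fun y' => x ^ q * (c * y' + a * x * y' + b / 2 * y' ^ 2) ^ p)
      (x ^ q * ((p : ℝ) * (c * y + a * x * y + b / 2 * y ^ 2) ^ (p - 1) *
        (c + a * x + b * y))) y :=
    (hv.pow p).const_mul (x ^ q)
  rw [h1.deriv, h2.deriv]
  obtain ⟨p', rfl⟩ : ∃ p', p = p' + 1 := ⟨p - 1, (Nat.succ_pred_eq_of_pos hp).symm⟩
  obtain ⟨q', rfl⟩ : ∃ q', q = q' + 1 := ⟨q - 1, (Nat.succ_pred_eq_of_pos hq).symm⟩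
  have hq0 : ((q' : ℝ) + 1) ≠ 0 := by positivity
  have hp0 : ((p' : ℝ) + 1) ≠ 0 := by positivity
  have hkey : B = -(b * ((q' : ℝ) + 1)) / ((p' : ℝ) + 1) := by
    push_cast at hbB
    field_simp at hbB ⊢
    linarith
  subst hkey
  simp only [Nat.add_sub_cancel, pow_succ]
  push_cast
  field_simp
  ring
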